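/- arXiv:2010.14636 — 2 statements merged into one kernel-verified Lean document; each statement's English description precedes it below -/
import Mathlib

section
/- Two words x and y in the alphabet Γ induce the same operator on the set of partitions (i.e., u_x(λ) = u_y(λ) for every partition λ, where both may be 0) if and only if α(x) = α(y) and w(x) = w(y). -/
/-- Alphabet Γ = ℕ ∪ ℕ̄ : a letter is `(false, i)` for unbarred `i` (up-operator)
and `(true, i)` for barred `ī` (down-operator); indices of interest are `i ≥ 1`. -/
abbrev Γ : Type := Bool × ℕ

/-- `c : ℕ → ℕ` records the column lengths `λ'_i` (for `i ≥ 1`) of a partition: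
nonincreasing, eventually zero; `c 0 = 0` is a normalization. -/
def IsPartition (c : ℕ → ℕ) : Prop :=
  (∀ i, 1 ≤ i → c (i + 1) ≤ c i) ∧ c 0 = 0 ∧ ∃ N, ∀ i, N ≤ i → c i = 0

open scoped Classical in
/-- The up-operator `u_i`: add a box to column `i` if the result is a partition, else `0` (`none`). -/
noncomputable def upFun (i : ℕ) (c : ℕ → ℕ) : Option (ℕ → ℕ) :=
  if 1 ≤ i ∧ IsPartition (Function.update c i (c i + 1)) then
    some (Function.update c i (c i + 1)) else none

open scoped Classical in
/-- The down-operator `d_i`: remove a box from column `i` if the result is a partition, else `0`. -/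
noncomputable def downFun (i : ℕ) (c : ℕ → ℕ) : Option (ℕ → ℕ) :=
  if 1 ≤ i ∧ 1 ≤ c i ∧ IsPartition (Function.update c i (c i - 1)) then
    some (Function.update c i (c i - 1)) else none

/-- `u_i` extended to `0` (operators applied to `0` give `0`). -/
noncomputable def U (i : ℕ) (o : Option (ℕ → ℕ)) : Option (ℕ → ℕ) := o.bind (upFun i)

/-- `d_i` extended to `0`. -/
noncomputable def D (i : ℕ) (o : Option (ℕ → ℕ)) : Option (ℕ → ℕ) := o.bind (downFun i)

/-- The action `u_x` of a word `x` on (possibly zero) partitions, rightmost letter acting first. -/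
noncomputable def act (x : List Γ) (o : Option (ℕ → ℕ)) : Option (ℕ → ℕ) :=
  x.foldr (fun l o => if l.1 then D l.2 o else U l.2 o) o

/-- The weight `w_j(x)`: occurrences of `j` minus occurrences of `j̄` in `x`. -/
def wt (j : ℕ) (x : List Γ) : ℤ :=
  (x.count ((false, j) : Γ) : ℤ) - (x.count ((true, j) : Γ) : ℤ)

/-- `α_i(x)`: the maximum of `w_{i+1}(x̃) - w_i(x̃)` over all suffix subwords `x̃` of `x`
(including the empty suffix, which contributes `0`). -/
def alphaV (i : ℕ) (x : List Γ) : ℤ :=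
  (x.tails.map (fun s => wt (i + 1) s - wt i s)).foldr max 0

/- ### auxiliary development -/

def gapZ (c : ℕ → ℕ) (i : ℕ) : ℤ := (c i : ℤ) - (c (i + 1) : ℤ)

def Ok (x : List Γ) (c : ℕ → ℕ) : Prop := ∀ i, 1 ≤ i → alphaV i x ≤ gapZ c i

lemma wt_nil (j : ℕ) : wt j ([] : List Γ) = 0 := by simp [wt]

lemma wt_cons_ne (j : ℕ) (l : Γ) (x : List Γ) (h : l.2 ≠ j) : wt j (l :: x) = wt j x := by
  obtain ⟨b, k⟩ := l
  simp only [wt, List.count_cons]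
  cases b <;> simp_all

lemma wt_cons_false (j : ℕ) (x : List Γ) : wt j (((false, j) : Γ) :: x) = wt j x + 1 := by
  simp [wt, List.count_cons]; ring

lemma wt_cons_true (j : ℕ) (x : List Γ) : wt j (((true, j) : Γ) :: x) = wt j x - 1 := by
  simp [wt, List.count_cons]; ring

lemma alphaV_nil (i : ℕ) : alphaV i ([] : List Γ) = 0 := by simp [alphaV, wt]

lemma alphaV_cons (i : ℕ) (l : Γ) (x : List Γ) :
    alphaV i (l :: x) = max (wt (i + 1) (l :: x) - wt i (l :: x)) (alphaV i x) := by
  simp [alphaV]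

lemma alphaV_nonneg (i : ℕ) (x : List Γ) : 0 ≤ alphaV i x := by
  induction x with
  | nil => simp [alphaV_nil]
  | cons l x ih => rw [alphaV_cons]; exact le_trans ih (le_max_right _ _)

lemma wdiff_le_alphaV (i : ℕ) (x : List Γ) : wt (i + 1) x - wt i x ≤ alphaV i x := by
  cases x with
  | nil => simp [wt_nil, alphaV_nil]
  | cons l x => rw [alphaV_cons]; exact le_max_left _ _

lemma wt_eq_zero (j : ℕ) (x : List Γ) (h : ∀ l ∈ x, l.2 ≠ j) : wt j x = 0 := by
  induction x with
  | nil => exact wt_nil j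
  | cons l x ih =>
    rw [wt_cons_ne j l x (h l (List.mem_cons_self))]
    exact ih fun l hl => h l (List.mem_cons_of_mem _ hl)

lemma alphaV_eq_zero (i : ℕ) (x : List Γ) (h : ∀ l ∈ x, l.2 < i) : alphaV i x = 0 := by
  induction x with
  | nil => exact alphaV_nil i
  | cons l x ih =>
    have h' : ∀ l ∈ x, l.2 < i := fun l hl => h l (List.mem_cons_of_mem _ hl)
    rw [alphaV_cons, ih h']
    have w1 : wt (i + 1) (l :: x) = 0 := wt_eq_zero _ _ (fun m hm => by have := h m hm; omega)
    have w2 : wt i (l :: x) = 0 := wt_eq_zero _ _ (fun m hm => by have := h m hm; omega)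
    rw [w1, w2]; simp

/- ### update lemmas -/

lemma isPartition_update_add {c : ℕ → ℕ} (hc : IsPartition c) {j : ℕ} (hj : 1 ≤ j) :
    IsPartition (Function.update c j (c j + 1)) ↔ (j = 1 ∨ c j < c (j - 1)) := by
  obtain ⟨h1, h2, N, hN⟩ := hc
  constructor
  · rintro ⟨g1, -, -⟩
    rcases eq_or_lt_of_le hj with h | h
    · exact Or.inl h.symm
    · right
      have := g1 (j - 1) (by omega)
      have e1 : j - 1 + 1 = j := by omega
      rw [e1, Function.update_self, Function.update_of_ne (by omega)] at this
      omega
  · intro h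
    refine ⟨?_, ?_, ⟨max N (j + 1), ?_⟩⟩
    · intro i hi
      rcases eq_or_ne i j with rfl | hij
      · rw [Function.update_self, Function.update_of_ne (by omega)]
        have := h1 i hi; omega
      rcases eq_or_ne (i + 1) j with e | e
      · rw [e, Function.update_self, Function.update_of_ne hij]
        have hj1 : j ≠ 1 := by omega
        rcases h with h | h
        · omega
        · have hci : c (j - 1) = c i := by rw [show j - 1 = i by omega]
          omega
      · rw [Function.update_of_ne e, Function.update_of_ne hij]; exact h1 i hi
    · rw [Function.update_of_ne (by omega)]; exact h2
    · intro i hi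
      rw [Function.update_of_ne (by omega)]
      exact hN i (by omega)

lemma isPartition_update_sub {c : ℕ → ℕ} (hc : IsPartition c) {j : ℕ} (hj : 1 ≤ j) :
    (1 ≤ c j ∧ IsPartition (Function.update c j (c j - 1))) ↔ c (j + 1) < c j := by
  obtain ⟨h1, h2, N, hN⟩ := hc
  constructor
  · rintro ⟨hcj, g1, -, -⟩
    have := g1 j hj
    rw [Function.update_self, Function.update_of_ne (by omega)] at this
    omega
  · intro h
    have hcj : 1 ≤ c j := by omega
    refine ⟨hcj, ?_, ?_, ⟨max N (j + 1), ?_⟩⟩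
    · intro i hi
      rcases eq_or_ne i j with rfl | hij
      · rw [Function.update_self, Function.update_of_ne (by omega)]
        omega
      rcases eq_or_ne (i + 1) j with e | e
      · rw [e, Function.update_self, Function.update_of_ne hij]
        have := h1 i hi
        rw [e] at this
        omega
      · rw [Function.update_of_ne e, Function.update_of_ne hij]; exact h1 i hi
    · rw [Function.update_of_ne (by omega)]; exact h2
    · intro i hi
      rw [Function.update_of_ne (by omega)]
      exact hN i (by omega)

lemma upFun_eq_some {c : ℕ → ℕ} (hc : IsPartition c) {j : ℕ} (hj : 1 ≤ j)
    (h : j = 1 ∨ c j < c (j - 1)) :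
    upFun j c = some (Function.update c j (c j + 1)) := by
  rw [upFun, if_pos ⟨hj, (isPartition_update_add hc hj).2 h⟩]

lemma upFun_eq_none {c : ℕ → ℕ} (hc : IsPartition c) {j : ℕ} (hj : 1 ≤ j)
    (h : ¬(j = 1 ∨ c j < c (j - 1))) :
    upFun j c = none := by
  rw [upFun, if_neg]
  rintro ⟨-, hp⟩
  exact h ((isPartition_update_add hc hj).1 hp)

lemma downFun_eq_some {c : ℕ → ℕ} (hc : IsPartition c) {j : ℕ} (hj : 1 ≤ j)
    (h : c (j + 1) < c j) :
    downFun j c = some (Function.update c j (c j - 1)) := by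
  obtain ⟨h1, h2⟩ := (isPartition_update_sub hc hj).2 h
  rw [downFun, if_pos ⟨hj, h1, h2⟩]

lemma downFun_eq_none {c : ℕ → ℕ} (hc : IsPartition c) {j : ℕ} (hj : 1 ≤ j)
    (h : ¬ c (j + 1) < c j) :
    downFun j c = none := by
  rw [downFun, if_neg]
  rintro ⟨-, h1, h2⟩
  exact h ((isPartition_update_sub hc hj).1 ⟨h1, h2⟩)

lemma act_cons_false (j : ℕ) (x : List Γ) (o : Option (ℕ → ℕ)) :
    act (((false, j) : Γ) :: x) o = U j (act x o) := rfl

lemma act_cons_true (j : ℕ) (x : List Γ) (o : Option (ℕ → ℕ)) :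
    act (((true, j) : Γ) :: x) o = D j (act x o) := rfl

/- ### key theorem -/

theorem actA : ∀ (x : List Γ), (∀ l ∈ x, 1 ≤ l.2) → ∀ c, IsPartition c →
    (Ok x c → ∃ c', act x (some c) = some c' ∧ IsPartition c' ∧
      ∀ i, (c' i : ℤ) = (c i : ℤ) + wt i x)
    ∧ (¬ Ok x c → act x (some c) = none) := by
  intro x
  induction x with
  | nil =>
    intro _ c hc
    have hok : Ok [] c := by
      intro i hi
      rw [alphaV_nil]
      have := hc.1 i hi
      unfold gapZ
      omega
    exact ⟨fun _ => ⟨c, rfl, hc, fun i => by rw [wt_nil]; ring⟩, fun h => absurd hok h⟩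
  | cons l x IH =>
    obtain ⟨b, j⟩ := l
    intro hx c hc
    have hj : 1 ≤ j := hx (b, j) (List.mem_cons_self)
    have hx' : ∀ l ∈ x, 1 ≤ l.2 := fun l hl => hx l (List.mem_cons_of_mem _ hl)
    have IH' := IH hx' c hc
    cases b with
    | false =>
      obtain ⟨p, rfl⟩ : ∃ p, j = p + 1 := ⟨j - 1, by omega⟩
      have key : Ok (((false, p + 1) : Γ) :: x) c ↔
          (Ok x c ∧ (p = 0 ∨ wt (p + 1) x - wt p x + 1 ≤ gapZ c p)) := by
        constructor
        · intro h
          refine ⟨fun i hi => le_trans (le_trans (le_max_right _ _) (alphaV_cons i _ x).ge)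
            (h i hi), ?_⟩
          rcases Nat.eq_zero_or_pos p with hp | hp
          · exact Or.inl hp
          · right
            have h2 := h p hp
            rw [alphaV_cons] at h2
            have h3 := le_trans (le_max_left _ _) h2
            rw [wt_cons_false, wt_cons_ne p (false, p + 1) x (by simp)] at h3
            omega
        · rintro ⟨hok, hC⟩ i hi
          rw [alphaV_cons]
          refine max_le ?_ (hok i hi)
          by_cases e1 : i = p
          · subst e1
            rcases hC with hC | hC
            · omega
            rw [wt_cons_false, wt_cons_ne i (false, i + 1) x (by simp)]
            omega
          · by_cases e2 : i = p + 1
            · subst e2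
              rw [wt_cons_false, wt_cons_ne (p + 1 + 1) (false, p + 1) x (by simp)]
              have := wdiff_le_alphaV (p + 1) x
              have := hok (p + 1) hi
              omega
            · rw [wt_cons_ne (i + 1) (false, p + 1) x (by simp; omega),
                wt_cons_ne i (false, p + 1) x (by simp; omega)]
              have := wdiff_le_alphaV i x
              have := hok i hi
              omega
      rcases Classical.em (Ok x c) with hok | hok
      · obtain ⟨c'', ha'', hp'', hv''⟩ := IH'.1 hok
        have hnat : ((p = 0) ∨ c'' (p + 1) < c'' p) ↔
            (p = 0 ∨ wt (p + 1) x - wt p x + 1 ≤ gapZ c p) := by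
          have v1 := hv'' p
          have v2 := hv'' (p + 1)
          unfold gapZ
          omega
        rcases Classical.em ((p = 0) ∨ c'' (p + 1) < c'' p) with hC | hC
        · have hup : upFun (p + 1) c'' = some (Function.update c'' (p + 1) (c'' (p + 1) + 1)) := by
            apply upFun_eq_some hp'' (by omega)
            rcases hC with h | h
            · left; omega
            · right; simpa using h
          have keyC : Ok (((false, p + 1) : Γ) :: x) c := key.2 ⟨hok, hnat.1 hC⟩
          have hpart : IsPartition (Function.update c'' (p + 1) (c'' (p + 1) + 1)) := by
            apply (isPartition_update_add hp'' (by omega)).2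
            rcases hC with h | h
            · left; omega
            · right; simpa using h
          constructor
          · intro _
            refine ⟨_, ?_, hpart, ?_⟩
            · rw [act_cons_false, ha'']
              exact hup
            · intro i
              by_cases e : i = p + 1
              · subst e
                rw [Function.update_self, wt_cons_false]
                have := hv'' (p + 1)
                push_cast
                omega
              · rw [Function.update_of_ne e, wt_cons_ne i (false, p + 1) x (Ne.symm e)]
                exact hv'' i
          · intro hcon; exact absurd keyC hcon
        · have keyN : ¬ Ok (((false, p + 1) : Γ) :: x) c := fun h => hC (hnat.2 (key.1 h).2)
          refine ⟨fun h => absurd h keyN, fun _ => ?_⟩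
          rw [act_cons_false, ha'']
          show upFun (p + 1) c'' = none
          apply upFun_eq_none hp'' (by omega)
          intro h
          apply hC
          rcases h with h | h
          · left; omega
          · right; simpa using h
      · have hnone : act x (some c) = none := IH'.2 hok
        refine ⟨fun h => absurd (key.1 h).1 hok, fun _ => ?_⟩
        rw [act_cons_false, hnone]
        rfl
    | true =>
      have key : Ok (((true, j) : Γ) :: x) c ↔
          (Ok x c ∧ wt (j + 1) x - wt j x + 1 ≤ gapZ c j) := by
        constructor
        · intro h
          refine ⟨fun i hi => le_trans (le_trans (le_max_right _ _) (alphaV_cons i _ x).ge)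
            (h i hi), ?_⟩
          have h2 := h j hj
          rw [alphaV_cons] at h2
          have h3 := le_trans (le_max_left _ _) h2
          rw [wt_cons_true, wt_cons_ne (j + 1) (true, j) x (by simp)] at h3
          omega
        · rintro ⟨hok, hC⟩ i hi
          rw [alphaV_cons]
          refine max_le ?_ (hok i hi)
          by_cases e1 : i = j
          · subst e1
            rw [wt_cons_true, wt_cons_ne (i + 1) (true, i) x (by simp)]
            omega
          · by_cases e2 : i + 1 = j
            · rw [← e2, wt_cons_true, wt_cons_ne i (true, i + 1) x (by simp)]
              have := wdiff_le_alphaV i x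
              have := hok i hi
              omega
            · rw [wt_cons_ne (i + 1) (true, j) x (by simp; omega),
                wt_cons_ne i (true, j) x (by simp; omega)]
              have := wdiff_le_alphaV i x
              have := hok i hi
              omega
      rcases Classical.em (Ok x c) with hok | hok
      · obtain ⟨c'', ha'', hp'', hv''⟩ := IH'.1 hok
        have hnat : (c'' (j + 1) < c'' j) ↔ (wt (j + 1) x - wt j x + 1 ≤ gapZ c j) := by
          have v1 := hv'' j
          have v2 := hv'' (j + 1)
          unfold gapZ
          omega
        rcases Classical.em (c'' (j + 1) < c'' j) with hC | hC
        · have hdown : downFun j c'' = some (Function.update c'' j (c'' j - 1)) :=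
            downFun_eq_some hp'' hj hC
          have keyC : Ok (((true, j) : Γ) :: x) c := key.2 ⟨hok, hnat.1 hC⟩
          have hpart : IsPartition (Function.update c'' j (c'' j - 1)) :=
            ((isPartition_update_sub hp'' hj).2 hC).2
          constructor
          · intro _
            refine ⟨_, ?_, hpart, ?_⟩
            · rw [act_cons_true, ha'']
              exact hdown
            · intro i
              by_cases e : i = j
              · subst e
                rw [Function.update_self, wt_cons_true]
                have := hv'' i
                have h1 : 1 ≤ c'' i := by omega
                push_cast [h1]
                omega
              · rw [Function.update_of_ne e, wt_cons_ne i (true, j) x (Ne.symm e)]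
                exact hv'' i
          · intro hcon; exact absurd keyC hcon
        · have keyN : ¬ Ok (((true, j) : Γ) :: x) c := fun h => hC (hnat.2 (key.1 h).2)
          refine ⟨fun h => absurd h keyN, fun _ => ?_⟩
          rw [act_cons_true, ha'']
          show downFun j c'' = none
          exact downFun_eq_none hp'' hj hC
      · have hnone : act x (some c) = none := IH'.2 hok
        refine ⟨fun h => absurd (key.1 h).1 hok, fun _ => ?_⟩
        rw [act_cons_true, hnone]
        rfl

/- ### staircase partitions -/

lemma staircase (g : ℕ → ℕ) (M : ℕ) :
    IsPartition (fun j => if j = 0 then 0 else ∑ k ∈ Finset.Icc j M, g k) ∧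
    (∀ j, 1 ≤ j → gapZ (fun j => if j = 0 then 0 else ∑ k ∈ Finset.Icc j M, g k) j
        = if j ≤ M then (g j : ℤ) else 0) := by
  set c : ℕ → ℕ := fun j => if j = 0 then 0 else ∑ k ∈ Finset.Icc j M, g k with hcdef
  have hsum : ∀ j, 1 ≤ j → j ≤ M → c j = g j + c (j + 1) := by
    intro j hj hjM
    show (if j = 0 then 0 else _) = g j + if j + 1 = 0 then 0 else _
    rw [if_neg (by omega), if_neg (by omega)]
    rw [Finset.Icc_eq_cons_Ioc hjM, Finset.sum_cons, ← Finset.Icc_add_one_left_eq_Ioc]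
  have hzero : ∀ j, M + 1 ≤ j → c j = 0 := by
    intro j hj
    show (if j = 0 then 0 else _) = 0
    rw [if_neg (by omega), Finset.Icc_eq_empty (by omega), Finset.sum_empty]
  constructor
  · refine ⟨?_, by simp [hcdef], ⟨M + 1, hzero⟩⟩
    intro i hi
    by_cases hiM : i ≤ M
    · rw [hsum i hi hiM]; omega
    · rw [hzero (i + 1) (by omega), hzero i (by omega)]
  · intro j hj
    by_cases hjM : j ≤ M
    · rw [if_pos hjM]
      unfold gapZ
      rw [hsum j hj hjM]
      push_cast; ring
    · rw [if_neg hjM]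
      unfold gapZ
      rw [hzero (j + 1) (by omega), hzero j (by omega)]
      simp

lemma wt_zero_of (x : List Γ) (hx : ∀ l ∈ x, 1 ≤ l.2) : wt 0 x = 0 :=
  wt_eq_zero 0 x fun l hl => by have := hx l hl; omega

/- one-sided alpha comparison -/

lemma alpha_le_of_act (x y : List Γ) (hx : ∀ l ∈ x, 1 ≤ l.2) (hy : ∀ l ∈ y, 1 ≤ l.2)
    (h : ∀ c : ℕ → ℕ, IsPartition c → act x (some c) = act y (some c))
    (i : ℕ) (hi : 1 ≤ i) : alphaV i y ≤ alphaV i x := by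
  by_contra hlt
  push_neg at hlt
  -- build a partition where x acts but y doesn't
  set M : ℕ := i + 1 + ((x ++ y).map Prod.snd).foldr max 0 with hM
  have hbig : ∀ l ∈ x ++ y, l.2 < M := by
    intro l hl
    have : l.2 ≤ ((x ++ y).map Prod.snd).foldr max 0 := by
      apply List.le_max_of_le (List.mem_map_of_mem (f := Prod.snd) hl)
      exact le_refl _
    omega
  set K : ℕ := (Finset.range (M + 1)).sup (fun k => (alphaV k x).toNat ⊔ (alphaV k y).toNat)
    with hK
  have hKx : ∀ k, k ≤ M → alphaV k x ≤ (K : ℤ) ∧ alphaV k y ≤ (K : ℤ) := by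
    intro k hk
    have h1 : (alphaV k x).toNat ⊔ (alphaV k y).toNat ≤ K := by
      rw [hK]
      exact Finset.le_sup (f := fun k => (alphaV k x).toNat ⊔ (alphaV k y).toNat) (Finset.mem_range_succ_iff.2 hk)
    constructor
    · rw [← Int.toNat_of_nonneg (alphaV_nonneg k x)]
      exact_mod_cast le_trans (le_max_left _ _) h1
    · rw [← Int.toNat_of_nonneg (alphaV_nonneg k y)]
      exact_mod_cast le_trans (le_max_right _ _) h1
  set g : ℕ → ℕ := fun k => if k = i then (alphaV i x).toNat else K with hg
  obtain ⟨hpart, hgap⟩ := staircase g M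
  set c : ℕ → ℕ := fun j => if j = 0 then 0 else ∑ k ∈ Finset.Icc j M, g k with hc
  have hiM : i ≤ M := by omega
  have hokx : Ok x c := by
    intro k hk
    rw [hgap k hk]
    by_cases hkM : k ≤ M
    · rw [if_pos hkM]
      by_cases hki : k = i
      · subst hki
        have hgk : (g k : ℤ) = alphaV k x := by
          simp [hg, Int.toNat_of_nonneg (alphaV_nonneg k x)]
        rw [hgk]
      · have hgk : (g k : ℤ) = (K : ℤ) := by simp [hg, hki]
        rw [hgk]
        exact (hKx k hkM).1
    · rw [if_neg hkM]
      rw [alphaV_eq_zero k x (fun l hl => by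
        have := hbig l (List.mem_append_left y hl); omega)]
  have hnoky : ¬ Ok y c := by
    intro hok
    have := hok i hi
    rw [hgap i hi, if_pos hiM] at this
    have hgk : (g i : ℤ) = alphaV i x := by
      simp [hg, Int.toNat_of_nonneg (alphaV_nonneg i x)]
    rw [hgk] at this
    omega
  obtain ⟨c', hx', -, -⟩ := (actA x hx c hpart).1 hokx
  have hy' : act y (some c) = none := (actA y hy c hpart).2 hnoky
  rw [h c hpart, hy'] at hx'
  exact absurd hx' (by simp)

lemma wt_eq_of_act (x y : List Γ) (hx : ∀ l ∈ x, 1 ≤ l.2) (hy : ∀ l ∈ y, 1 ≤ l.2)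
    (h : ∀ c : ℕ → ℕ, IsPartition c → act x (some c) = act y (some c)) (i : ℕ) :
    wt i x = wt i y := by
  set M : ℕ := 1 + ((x ++ y).map Prod.snd).foldr max 0 with hM
  have hbig : ∀ l ∈ x ++ y, l.2 < M := by
    intro l hl
    have : l.2 ≤ ((x ++ y).map Prod.snd).foldr max 0 := by
      apply List.le_max_of_le (List.mem_map_of_mem (f := Prod.snd) hl)
      exact le_refl _
    omega
  set K : ℕ := (Finset.range (M + 1)).sup (fun k => (alphaV k x).toNat ⊔ (alphaV k y).toNat)
    with hK
  have hKx : ∀ k, k ≤ M → alphaV k x ≤ (K : ℤ) ∧ alphaV k y ≤ (K : ℤ) := by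
    intro k hk
    have h1 : (alphaV k x).toNat ⊔ (alphaV k y).toNat ≤ K := by
      rw [hK]
      exact Finset.le_sup (f := fun k => (alphaV k x).toNat ⊔ (alphaV k y).toNat)
        (Finset.mem_range_succ_iff.2 hk)
    constructor
    · rw [← Int.toNat_of_nonneg (alphaV_nonneg k x)]
      exact_mod_cast le_trans (le_max_left _ _) h1
    · rw [← Int.toNat_of_nonneg (alphaV_nonneg k y)]
      exact_mod_cast le_trans (le_max_right _ _) h1
  obtain ⟨hpart, hgap⟩ := staircase (fun _ => K) M
  set c : ℕ → ℕ := fun j => if j = 0 then 0 else ∑ k ∈ Finset.Icc j M, K with hc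
  have hok : ∀ z : List Γ, (∀ l ∈ z, l.2 < M) →
      (∀ k, k ≤ M → alphaV k z ≤ (K : ℤ)) → Ok z c := by
    intro z h1 h2 k hk
    rw [hgap k hk]
    by_cases hkM : k ≤ M
    · rw [if_pos hkM]; exact h2 k hkM
    · rw [if_neg hkM]
      rw [alphaV_eq_zero k z (fun l hl => by have := h1 l hl; omega)]
  have hokx : Ok x c := hok x (fun l hl => hbig l (List.mem_append_left y hl))
    (fun k hk => (hKx k hk).1)
  have hoky : Ok y c := hok y (fun l hl => hbig l (List.mem_append_right x hl))
    (fun k hk => (hKx k hk).2)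
  obtain ⟨cx, hax, -, hvx⟩ := (actA x hx c hpart).1 hokx
  obtain ⟨cy, hay, -, hvy⟩ := (actA y hy c hpart).1 hoky
  rw [h c hpart, hay] at hax
  obtain rfl : cy = cx := Option.some_injective _ hax
  have := hvx i
  have := hvy i
  omega

theorem same_action_iff (x y : List Γ)
    (hx : ∀ l ∈ x, 1 ≤ l.2) (hy : ∀ l ∈ y, 1 ≤ l.2) :
    (∀ c : ℕ → ℕ, IsPartition c → act x (some c) = act y (some c)) ↔
      (∀ i, 1 ≤ i → alphaV i x = alphaV i y ∧ wt i x = wt i y) := by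
  constructor
  · intro h i hi
    exact ⟨le_antisymm (alpha_le_of_act y x hy hx (fun c hc => (h c hc).symm) i hi)
        (alpha_le_of_act x y hx hy h i hi),
      wt_eq_of_act x y hx hy h i⟩
  · intro h c hc
    have hwt : ∀ i, wt i x = wt i y := by
      intro i
      rcases Nat.eq_zero_or_pos i with rfl | hi
      · rw [wt_zero_of x hx, wt_zero_of y hy]
      · exact (h i hi).2
    have hokiff : Ok x c ↔ Ok y c := by
      unfold Ok
      exact forall_congr' fun i => forall_congr' fun hi => by rw [(h i hi).1]
    by_cases hok : Ok x c
    · obtain ⟨cx, hax, -, hvx⟩ := (actA x hx c hc).1 hok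
      obtain ⟨cy, hay, -, hvy⟩ := (actA y hy c hc).1 (hokiff.1 hok)
      rw [hax, hay]
      congr 1
      funext i
      have h1 := hvx i
      have h2 := hvy i
      have h3 := hwt i
      omega
    · rw [(actA x hx c hc).2 hok, (actA y hy c hc).2 (fun h' => hok (hokiff.2 h'))]
end

section
/- As operators on partitions, for every m, n ∈ N: u_n^m u_{n-1}^m ⋯ u_1^m = (u_n u_{n-1} ⋯ u_1)^m, i.e., applying the composite u_n⋯u_1 m times equals applying u_1 m times, then u_2 m times, ..., then u_n m times. -/
/-- Auxiliary: add `m` boxes to each of columns `1..n`. -/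
def g (m n : ℕ) (c : ℕ → ℕ) : ℕ → ℕ := fun i => if 1 ≤ i ∧ i ≤ n then c i + m else c i

lemma g_zero (m : ℕ) (c : ℕ → ℕ) : g m 0 c = c := by
  funext i; unfold g; split_ifs <;> omega

lemma g_zero' (n : ℕ) (c : ℕ → ℕ) : g 0 n c = c := by
  funext i; unfold g; split_ifs <;> omega

lemma g_succ (m n : ℕ) (c : ℕ → ℕ) :
    g m (n + 1) c = Function.update (g m n c) (n + 1) (g m n c (n + 1) + m) := by
  funext j
  rcases eq_or_ne j (n + 1) with rfl | hj
  · rw [Function.update_self]; unfold g; split_ifs <;> omega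
  · rw [Function.update_of_ne hj]; unfold g; split_ifs <;> omega

lemma g_g (k n : ℕ) (c : ℕ → ℕ) : g k n (g 1 n c) = g (k + 1) n c := by
  funext i; unfold g; split_ifs <;> omega

lemma isPartition_g (m n : ℕ) {c : ℕ → ℕ} (hc : IsPartition c) : IsPartition (g m n c) := by
  obtain ⟨h1, h2, N, hN⟩ := hc
  refine ⟨fun i hi => ?_, ?_, ⟨max N (n + 1), fun i hi => ?_⟩⟩
  · have := h1 i hi
    unfold g; split_ifs <;> omega
  · unfold g; split_ifs <;> omega
  · have hN' := hN i (le_trans (le_max_left _ _) hi)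
    have hn' : n + 1 ≤ i := le_trans (le_max_right _ _) hi
    unfold g; split_ifs <;> omega

lemma isPartition_update {c : ℕ → ℕ} (hc : IsPartition c) (i t : ℕ) (hi : 1 ≤ i)
    (ht : 2 ≤ i → c i + t ≤ c (i - 1)) :
    IsPartition (Function.update c i (c i + t)) := by
  obtain ⟨h1, h2, N, hN⟩ := hc
  refine ⟨fun j hj => ?_, ?_, ⟨max N (i + 1), fun j hj => ?_⟩⟩
  · rw [Function.update_apply, Function.update_apply]
    have hj1 := h1 j hj
    split_ifs with ha hb hb
    · omega
    · subst ha
      have := ht (by omega)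
      simpa using this
    · subst hb; omega
    · exact hj1
  · rw [Function.update_of_ne (by omega)]; exact h2
  · have hN' := hN j (le_trans (le_max_left _ _) hj)
    have hj' : j ≠ i := by
      have := le_trans (le_max_right _ _) hj; omega
    rw [Function.update_of_ne hj']; exact hN'

lemma upFun_eq {c : ℕ → ℕ} (hc : IsPartition c) (i : ℕ) (hi : 1 ≤ i)
    (ht : 2 ≤ i → c i + 1 ≤ c (i - 1)) :
    upFun i c = some (Function.update c i (c i + 1)) := by
  rw [upFun, if_pos ⟨hi, isPartition_update hc i 1 hi ht⟩]

lemma act_cons (a : Γ) (x : List Γ) (o : Option (ℕ → ℕ)) :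
    act (a :: x) o = if a.1 then D a.2 (act x o) else U a.2 (act x o) := rfl

lemma act_append (x y : List Γ) (o : Option (ℕ → ℕ)) :
    act (x ++ y) o = act x (act y o) := by
  unfold act; rw [List.foldr_append]

lemma act_replicate (i : ℕ) (hi : 1 ≤ i) :
    ∀ m (c : ℕ → ℕ), IsPartition c → (2 ≤ i → c i + m ≤ c (i - 1)) →
    act (List.replicate m ((false, i) : Γ)) (some c) =
      some (Function.update c i (c i + m)) := by
  intro m
  induction m with
  | zero => intro c hc ht; simp [act, Function.update_eq_self]
  | succ k ih =>
    intro c hc ht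
    have hk : 2 ≤ i → c i + k ≤ c (i - 1) := fun h => by have := ht h; omega
    have hd := isPartition_update hc i k hi hk
    rw [List.replicate_succ, act_cons, ih c hc hk]
    have hcond : 2 ≤ i → (Function.update c i (c i + k)) i + 1 ≤
        (Function.update c i (c i + k)) (i - 1) := by
      intro h
      rw [Function.update_self, Function.update_of_ne (by omega : i - 1 ≠ i)]
      have := ht h; omega
    show upFun i (Function.update c i (c i + k)) = _
    rw [upFun_eq hd i hi hcond, Function.update_self, Function.update_idem, Nat.add_assoc]

lemma act_join (m : ℕ) : ∀ n (c : ℕ → ℕ), IsPartition c →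
    act (((List.range n).reverse.map
      (fun k => List.replicate m ((false, k + 1) : Γ))).flatten) (some c) = some (g m n c) := by
  intro n
  induction n with
  | zero => intro c hc; simp [act, g_zero]
  | succ k ih =>
    intro c hc
    have hl : (((List.range (k + 1)).reverse.map
        (fun j => List.replicate m ((false, j + 1) : Γ))).flatten) =
        List.replicate m ((false, k + 1) : Γ) ++
        (((List.range k).reverse.map (fun j => List.replicate m ((false, j + 1) : Γ))).flatten) := by
      rw [List.range_succ]; simp
    have hcond : 2 ≤ k + 1 → g m k c (k + 1) + m ≤ g m k c (k + 1 - 1) := by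
      intro h
      have h1 : 1 ≤ k := by omega
      have := hc.1 k h1
      simp only [Nat.add_sub_cancel]
      unfold g; split_ifs <;> omega
    rw [hl, act_append, ih c hc,
      act_replicate (k + 1) (by omega) m (g m k c) (isPartition_g m k hc) hcond, g_succ]

lemma act_chain : ∀ n (c : ℕ → ℕ), IsPartition c →
    act ((List.range n).reverse.map (fun k => ((false, k + 1) : Γ))) (some c) =
      some (g 1 n c) := by
  intro n
  induction n with
  | zero => intro c hc; simp [act, g_zero]
  | succ k ih =>
    intro c hc
    have hl : (List.range (k + 1)).reverse.map (fun j => ((false, j + 1) : Γ)) =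
        ((false, k + 1) : Γ) :: (List.range k).reverse.map (fun j => ((false, j + 1) : Γ)) := by
      rw [List.range_succ]; simp
    rw [hl, act_cons, ih c hc]
    have hcond : 2 ≤ k + 1 → g 1 k c (k + 1) + 1 ≤ g 1 k c (k + 1 - 1) := by
      intro h
      have h1 : 1 ≤ k := by omega
      have := hc.1 k h1
      simp only [Nat.add_sub_cancel]
      unfold g; split_ifs <;> omega
    show upFun (k + 1) (g 1 k c) = _
    rw [upFun_eq (isPartition_g 1 k hc) (k + 1) (by omega) hcond, g_succ]

lemma iterate_chain (n : ℕ) : ∀ m (c : ℕ → ℕ), IsPartition c →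
    (fun o => act ((List.range n).reverse.map (fun k => ((false, k + 1) : Γ))) o)^[m] (some c)
      = some (g m n c) := by
  intro m
  induction m with
  | zero => intro c hc; simp [g_zero']
  | succ k ih =>
    intro c hc
    rw [Function.iterate_succ_apply]
    show (fun o => act _ o)^[k] (act _ (some c)) = _
    rw [act_chain n c hc, ih _ (isPartition_g 1 n hc), g_g]

theorem powers_of_chain (m n : ℕ) (hm : 1 ≤ m) (hn : 1 ≤ n)
    (c : ℕ → ℕ) (hc : IsPartition c) :
    act (((List.range n).reverse.map
        (fun k => List.replicate m ((false, k + 1) : Γ))).flatten) (some c) =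
    (fun o => act ((List.range n).reverse.map (fun k => ((false, k + 1) : Γ))) o)^[m]
      (some c) := by
  rw [act_join m n c hc, iterate_chain n m c hc]
end
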